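/- For a Pauli-string Hamiltonian H(W) = Σ_{P₁…Pₙ ∈ {I,X,Y,Z}} w_{P₁…Pₙ} σ_{P₁}⊗…⊗σ_{Pₙ}, the quantity ‖H(W)‖_{L̃} := 2 max_{i=1,…,n} Σ_{P₁…Pₙ : Pᵢ ≠ I} |w_{P₁…Pₙ}| is an upper bound on the quantum Lipschitz constant: ‖H(W)‖_L ≤ ‖H(W)‖_{L̃}. -/

import Mathlib

open scoped BigOperators ComplexOrder

/-- Matrices acting on `n` qubits. -/
abbrev QMat (n : ℕ) := Matrix (Fin n → Fin 2) (Fin n → Fin 2) ℂ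

/-- The operator norm (maximal absolute value of the eigenvalues) of a Hermitian matrix. -/
noncomputable def opNorm {n : ℕ} (X : QMat n) : ℝ :=
  if h : X.IsHermitian then ⨆ i, |h.eigenvalues i| else 0

/-- `H` acts as the identity on qubit `i`, i.e. `H = H̃ ⊗ I_i`. -/
def actsIdOn {n : ℕ} (i : Fin n) (H : QMat n) : Prop :=
  ∀ a b : Fin n → Fin 2,
    H a b = if a i = b i then H (Function.update a i 0) (Function.update b i 0) else 0

/-- The quantum Lipschitz constant
`‖H‖_L = 2 maxᵢ min { ‖H − H̃‖_∞ : H̃ acts as the identity on qubit i }`. -/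
noncomputable def lipConst {n : ℕ} (H : QMat n) : ℝ :=
  2 * ⨆ i : Fin n,
    sInf { r | ∃ K : QMat n, K.IsHermitian ∧ actsIdOn i K ∧ r = opNorm (H - K) }

/-- The identity and the three Pauli matrices. -/
noncomputable def pauli : Fin 4 → Matrix (Fin 2) (Fin 2) ℂ
  | 0 => 1
  | 1 => !![0, 1; 1, 0]
  | 2 => !![0, -Complex.I; Complex.I, 0]
  | 3 => !![1, 0; 0, -1]

/-- The Pauli string `σ_{P₁} ⊗ ⋯ ⊗ σ_{Pₙ}`. -/
noncomputable def pauliString {n : ℕ} (P : Fin n → Fin 4) : QMat n :=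
  fun a b => ∏ j, pauli (P j) (a j) (b j)

/-- The Pauli-string Hamiltonian `H(W) = Σ_P w_P σ_{P₁} ⊗ ⋯ ⊗ σ_{Pₙ}`. -/
noncomputable def hamW {n : ℕ} (w : (Fin n → Fin 4) → ℝ) : QMat n :=
  ∑ P, (w P : ℂ) • pauliString P

/-- The approximated Lipschitz quantity
`‖H(W)‖_L̃ = 2 maxᵢ Σ_{P : Pᵢ ≠ I} |w_P|`. -/
noncomputable def Ltilde {n : ℕ} (w : (Fin n → Fin 4) → ℝ) : ℝ :=
  2 * ⨆ i : Fin n, ∑ P ∈ Finset.univ.filter (fun P : Fin n → Fin 4 => P i ≠ 0), |w P|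

/-! ### Auxiliary lemmas -/

open scoped Matrix

lemma pauli_conj (q : Fin 4) (a b : Fin 2) :
    (starRingEnd ℂ) (pauli q a b) = pauli q b a := by
  fin_cases q <;> fin_cases a <;> fin_cases b <;>
    simp [pauli, Matrix.one_apply]

lemma pauli_mul (q : Fin 4) : pauli q * pauli q = 1 := by
  fin_cases q <;> ext a b <;> fin_cases a <;> fin_cases b <;>
    simp [pauli, Matrix.mul_apply, Fin.sum_univ_two, Matrix.one_apply, Complex.I_mul_I]

lemma pauliString_conjTranspose {n : ℕ} (P : Fin n → Fin 4) :
    (pauliString P)ᴴ = pauliString P := by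
  ext a b
  simp only [Matrix.conjTranspose_apply, pauliString, Complex.star_def, map_prod, pauli_conj]

lemma pauliString_mul {n : ℕ} (P : Fin n → Fin 4) :
    pauliString P * pauliString P = 1 := by
  ext a b
  rw [Matrix.mul_apply]
  have h1 : ∀ c : Fin n → Fin 2,
      pauliString P a c * pauliString P c b
        = ∏ j, pauli (P j) (a j) (c j) * pauli (P j) (c j) (b j) := by
    intro c; rw [pauliString, pauliString, ← Finset.prod_mul_distrib]
  simp_rw [h1]
  rw [← Fintype.piFinset_univ,
    Finset.sum_prod_piFinset Finset.univ (fun j y => pauli (P j) (a j) y * pauli (P j) y (b j))]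
  have h2 : ∀ j, (∑ x : Fin 2, pauli (P j) (a j) x * pauli (P j) x (b j))
      = (1 : Matrix (Fin 2) (Fin 2) ℂ) (a j) (b j) := by
    intro j
    rw [← Matrix.mul_apply, pauli_mul]
  simp_rw [h2, Matrix.one_apply]
  by_cases hab : a = b
  · subst hab; simp
  · obtain ⟨j, hj⟩ := Function.ne_iff.1 hab
    rw [if_neg hab]
    exact Finset.prod_eq_zero (Finset.mem_univ j) (if_neg hj)

lemma sum_pauli_isHermitian {n : ℕ} (F : Finset (Fin n → Fin 4)) (w : (Fin n → Fin 4) → ℝ) :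
    (∑ P ∈ F, (w P : ℂ) • pauliString P).IsHermitian := by
  rw [Matrix.IsHermitian, Matrix.conjTranspose_sum]
  refine Finset.sum_congr rfl fun P _ => ?_
  rw [Matrix.conjTranspose_smul, pauliString_conjTranspose]
  simp [Complex.star_def, Complex.conj_ofReal]

lemma norm_equiv_mulVec_eq {ι : Type*} [Fintype ι] [DecidableEq ι]
    (M : Matrix ι ι ℂ) (hM : Mᴴ * M = 1) (x : ι → ℂ) :
    ‖(WithLp.equiv 2 (ι → ℂ)).symm (M *ᵥ x)‖ = ‖(WithLp.equiv 2 (ι → ℂ)).symm x‖ := by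
  have h1 : (inner ℂ ((WithLp.equiv 2 (ι → ℂ)).symm (M *ᵥ x))
      ((WithLp.equiv 2 (ι → ℂ)).symm (M *ᵥ x)) : ℂ)
      = inner ℂ ((WithLp.equiv 2 (ι → ℂ)).symm x) ((WithLp.equiv 2 (ι → ℂ)).symm x) := by
    rw [WithLp.equiv_symm_apply, EuclideanSpace.inner_toLp_toLp, EuclideanSpace.inner_toLp_toLp,
      dotProduct_comm, dotProduct_comm x, Matrix.star_mulVec, ← Matrix.dotProduct_mulVec, Matrix.mulVec_mulVec, hM,
      Matrix.one_mulVec]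
  have h2 := h1
  rw [inner_self_eq_norm_sq_to_K, inner_self_eq_norm_sq_to_K] at h2
  have h3 : ‖(WithLp.equiv 2 (ι → ℂ)).symm (M *ᵥ x)‖ ^ 2
      = ‖(WithLp.equiv 2 (ι → ℂ)).symm x‖ ^ 2 := by
    exact_mod_cast h2
  nlinarith [norm_nonneg ((WithLp.equiv 2 (ι → ℂ)).symm (M *ᵥ x)),
    norm_nonneg ((WithLp.equiv 2 (ι → ℂ)).symm x)]

lemma opNorm_sum_pauli_le {n : ℕ} (F : Finset (Fin n → Fin 4)) (w : (Fin n → Fin 4) → ℝ) :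
    opNorm (∑ P ∈ F, (w P : ℂ) • pauliString P) ≤ ∑ P ∈ F, |w P| := by
  set D : QMat n := ∑ P ∈ F, (w P : ℂ) • pauliString P with hDdef
  have hD : D.IsHermitian := sum_pauli_isHermitian F w
  rw [opNorm, dif_pos hD]
  refine Real.iSup_le (fun j => ?_) (Finset.sum_nonneg fun _ _ => abs_nonneg _)
  set v : EuclideanSpace ℂ (Fin n → Fin 2) := hD.eigenvectorBasis j with hv
  have hnv : ‖v‖ = 1 := hD.eigenvectorBasis.orthonormal.1 j
  have hmul : D *ᵥ ⇑v = hD.eigenvalues j • ⇑v := hD.mulVec_eigenvectorBasis j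
  set L := (WithLp.linearEquiv 2 ℂ ((Fin n → Fin 2) → ℂ)).symm with hL
  have hLe : ∀ y : (Fin n → Fin 2) → ℂ, L y = (WithLp.equiv 2 ((Fin n → Fin 2) → ℂ)).symm y :=
    fun _ => rfl
  have key : |hD.eigenvalues j| = ‖L (D *ᵥ ⇑v)‖ := by
    rw [hmul]
    have : L (hD.eigenvalues j • ⇑v) = hD.eigenvalues j • v := rfl
    rw [this, norm_smul, hnv, mul_one, Real.norm_eq_abs]
  rw [key]
  have hsum : D *ᵥ ⇑v = ∑ P ∈ F, (w P : ℂ) • (pauliString P *ᵥ ⇑v) := by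
    have h0 : D *ᵥ ⇑v = ∑ P ∈ F, ((w P : ℂ) • pauliString P) *ᵥ ⇑v := by
      funext k
      simp only [hDdef, Matrix.mulVec, dotProduct, Matrix.sum_apply, Finset.sum_apply,
        Finset.sum_mul]
      exact Finset.sum_comm
    rw [h0]
    exact Finset.sum_congr rfl fun P _ => Matrix.smul_mulVec _ _ _
  rw [hsum, map_sum]
  refine le_trans (norm_sum_le _ _) (le_of_eq (Finset.sum_congr rfl fun P _ => ?_))
  rw [map_smul, norm_smul]
  have hu : (pauliString P)ᴴ * pauliString P = 1 := by
    rw [pauliString_conjTranspose]; exact pauliString_mul P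
  have h5 : ‖L (pauliString P *ᵥ ⇑v)‖ = ‖L ⇑v‖ := by
    rw [hLe, hLe]; exact norm_equiv_mulVec_eq _ hu _
  have h6 : L ⇑v = v := rfl
  rw [h5, h6, hnv, mul_one, Complex.norm_real, Real.norm_eq_abs]

lemma opNorm_nonneg {n : ℕ} (X : QMat n) : 0 ≤ opNorm X := by
  rw [opNorm]
  split_ifs with h
  · exact Real.iSup_nonneg fun _ => abs_nonneg _
  · exact le_refl 0

lemma pauliString_actsIdOn {n : ℕ} (i : Fin n) (P : Fin n → Fin 4) (hP : P i = 0)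
    (a b : Fin n → Fin 2) :
    pauliString P a b
      = if a i = b i then pauliString P (Function.update a i 0) (Function.update b i 0)
        else 0 := by
  have hsplit : pauliString P a b
      = pauli (P i) (a i) (b i) * ∏ j ∈ {i}ᶜ, pauli (P j) (a j) (b j) :=
    Fintype.prod_eq_mul_prod_compl i _
  have hsplit2 : pauliString P (Function.update a i 0) (Function.update b i 0)
      = pauli (P i) 0 0 * ∏ j ∈ {i}ᶜ, pauli (P j) (a j) (b j) := by
    rw [pauliString, Fintype.prod_eq_mul_prod_compl i]
    congr 1
    · rw [Function.update_self, Function.update_self]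
    · refine Finset.prod_congr rfl fun j hj => ?_
      have hji : j ≠ i := by simpa using hj
      rw [Function.update_of_ne hji, Function.update_of_ne hji]
  rw [hP] at hsplit hsplit2
  have h00 : pauli 0 (0 : Fin 2) (0 : Fin 2) = 1 := by simp [pauli, Matrix.one_apply]
  have hone : pauli 0 (a i) (b i) = if a i = b i then 1 else 0 := by
    simp [pauli, Matrix.one_apply]
  by_cases h : a i = b i
  · rw [if_pos h, hsplit, hsplit2, hone, if_pos h, h00]
  · rw [if_neg h, hsplit, hone, if_neg h, zero_mul]

lemma sum_actsIdOn {n : ℕ} (i : Fin n) (w : (Fin n → Fin 4) → ℝ) :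
    actsIdOn i (∑ P ∈ Finset.univ.filter (fun P : Fin n → Fin 4 => P i = 0),
      (w P : ℂ) • pauliString P) := by
  intro a b
  by_cases h : a i = b i
  · rw [if_pos h]
    simp only [Matrix.sum_apply, Matrix.smul_apply]
    refine Finset.sum_congr rfl fun P hP => ?_
    rw [pauliString_actsIdOn i P (Finset.mem_filter.1 hP).2 a b, if_pos h]
  · rw [if_neg h]
    simp only [Matrix.sum_apply, Matrix.smul_apply]
    refine Finset.sum_eq_zero fun P hP => ?_
    rw [pauliString_actsIdOn i P (Finset.mem_filter.1 hP).2 a b, if_neg h, smul_zero]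

/-- `‖H(W)‖_L̃` is an upper bound on the quantum Lipschitz constant of the Pauli-string
Hamiltonian `H(W)`: `‖H(W)‖_L ≤ ‖H(W)‖_L̃`. -/
theorem lipConst_le_Ltilde (n : ℕ) (w : (Fin n → Fin 4) → ℝ) :
    lipConst (hamW w) ≤ Ltilde w := by
  rw [lipConst, Ltilde]
  refine mul_le_mul_of_nonneg_left ?_ (by norm_num)
  refine ciSup_mono (Set.Finite.bddAbove (Set.finite_range _)) fun i => ?_
  set K : QMat n := ∑ P ∈ Finset.univ.filter (fun P : Fin n → Fin 4 => P i = 0),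
    (w P : ℂ) • pauliString P with hK
  have hdiff : hamW w - K
      = ∑ P ∈ Finset.univ.filter (fun P : Fin n → Fin 4 => P i ≠ 0),
        (w P : ℂ) • pauliString P := by
    rw [hamW, hK, ← Finset.sum_filter_add_sum_filter_not Finset.univ
      (fun P : Fin n → Fin 4 => P i = 0) (fun P => (w P : ℂ) • pauliString P)]
    simp [Finset.filter_congr (fun P _ => Iff.rfl)]
  refine csInf_le_of_le ⟨0, fun r hr => ?_⟩
    ⟨K, sum_pauli_isHermitian _ w, sum_actsIdOn i w, rfl⟩ ?_
  · obtain ⟨K', _, _, rfl⟩ := hr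
    exact opNorm_nonneg _
  · rw [hdiff]
    exact opNorm_sum_pauli_le _ w
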